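/- Let α, β ∈ (0, π/2) and γ = π/4, and let P₁₃ be the orthogonal projection onto span{a₁, a₃} ⊂ ℂ²⊗ℂ², where a₁ = cosα·|00⟩ − sinα·|11⟩ and a₃ = (1/√2)(sinα·|00⟩ + sinβ·|01⟩ + cosβ·|10⟩ + cosα·|11⟩). Then the partial transpose of P₁₃ has a strictly negative eigenvalue. -/

import Mathlib

noncomputable section

open scoped ComplexOrder

/-- The two-qubit Hilbert space ℂ² ⊗ ℂ², modeled as ℂ^(2×2) with the standard inner product. -/
abbrev TwoQubit : Type := EuclideanSpace ℂ (Fin 2 × Fin 2)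

/-- The computational basis vector |ab⟩. -/
def ket (a b : Fin 2) : TwoQubit := EuclideanSpace.single (a, b) 1

/-- A vector is a product vector if it is of the form u ⊗ w. -/
def IsProductVec (v : TwoQubit) : Prop :=
  ∃ u w : Fin 2 → ℂ, ∀ a b : Fin 2, v (a, b) = u a * w b

/-- The 2×2 coefficient matrix of a vector in ℂ² ⊗ ℂ². -/
def coeffMat (v : TwoQubit) : Matrix (Fin 2) (Fin 2) ℂ :=
  Matrix.of fun a b => v (a, b)

/-- Partial transpose (on the second tensor factor) of an operator on ℂ² ⊗ ℂ². -/
def ptrans (M : Matrix (Fin 2 × Fin 2) (Fin 2 × Fin 2) ℂ) :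
    Matrix (Fin 2 × Fin 2) (Fin 2 × Fin 2) ℂ :=
  Matrix.of fun p q => M (p.1, q.2) (q.1, p.2)

/-- The matrix of the orthogonal projection vv* + ww* onto span{v, w} (for orthonormal v, w). -/
def projMat (v w : TwoQubit) : Matrix (Fin 2 × Fin 2) (Fin 2 × Fin 2) ℂ :=
  Matrix.of fun p q => v p * star (v q) + w p * star (w q)

/-- `M` has a strictly negative (real) eigenvalue. -/
def HasNegEig (M : Matrix (Fin 2 × Fin 2) (Fin 2 × Fin 2) ℂ) : Prop :=
  ∃ c : ℝ, c < 0 ∧ ∃ x : (Fin 2 × Fin 2) → ℂ, x ≠ 0 ∧ M.mulVec x = (c : ℂ) • x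

/-- An operator on ℂ² ⊗ ℂ² is separable if it is a finite sum of Kronecker products of
positive semidefinite operators. -/
def SeparableOp (M : Matrix (Fin 2 × Fin 2) (Fin 2 × Fin 2) ℂ) : Prop :=
  ∃ (n : ℕ) (A B : Fin n → Matrix (Fin 2) (Fin 2) ℂ),
    (∀ i, (A i).PosSemidef) ∧ (∀ i, (B i).PosSemidef) ∧
    M = ∑ i, Matrix.kroneckerMap (· * ·) (A i) (B i)

/-- a₁ = cos α |00⟩ − sin α |11⟩. -/
def aVec1 (α : ℝ) : TwoQubit :=
  (Real.cos α : ℂ) • ket 0 0 - (Real.sin α : ℂ) • ket 1 1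

/-- a₃ at γ = π/4: (1/√2)(sin α |00⟩ + sin β |01⟩ + cos β |10⟩ + cos α |11⟩). -/
def aVec3' (α β : ℝ) : TwoQubit :=
  ((1 / Real.sqrt 2 : ℝ) : ℂ) •
    ((Real.sin α : ℂ) • ket 0 0 + (Real.sin β : ℂ) • ket 0 1 +
     (Real.cos β : ℂ) • ket 1 0 + (Real.cos α : ℂ) • ket 1 1)

/-- If a Hermitian matrix has a vector with negative (real) quadratic form, it has a
negative eigenvalue with eigenvector. -/
lemma hasNegEig_of_neg_form {n : Type*} [Fintype n] [DecidableEq n]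
    (M : Matrix n n ℂ) (hM : M.IsHermitian) (x : n → ℂ) (f : ℝ) (hf : f < 0)
    (hx : dotProduct (star x) (M.mulVec x) = (f : ℂ)) :
    ∃ c : ℝ, c < 0 ∧ ∃ y : n → ℂ, y ≠ 0 ∧ M.mulVec y = (c : ℂ) • y := by
  by_contra h
  push_neg at h
  have heig : ∀ i, 0 ≤ hM.eigenvalues i := by
    intro i
    by_contra hneg
    push_neg at hneg
    have hy : (⇑(hM.eigenvectorBasis i) : n → ℂ) ≠ 0 :=
      fun h0 => hM.eigenvectorBasis.orthonormal.ne_zero i ((WithLp.ofLp_eq_zero _).mp h0)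
    refine h (hM.eigenvalues i) hneg (⇑(hM.eigenvectorBasis i)) hy ?_
    rw [hM.mulVec_eigenvectorBasis i]
    ext j
    simp [Complex.real_smul]
  have hpsd : M.PosSemidef := hM.posSemidef_iff_eigenvalues_nonneg.mpr heig
  have h0 := hpsd.dotProduct_mulVec_nonneg x
  rw [hx, Complex.le_def] at h0
  simp only [Complex.zero_re, Complex.ofReal_re] at h0
  linarith [h0.1]

/-- For α, β ∈ (0, π/2) and γ = π/4, the partial transpose of the projection
P₁₃ = a₁a₁* + a₃a₃* has a strictly negative eigenvalue. -/
theorem stmt12 (α β : ℝ) (hα : α ∈ Set.Ioo 0 (Real.pi / 2))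
    (hβ : β ∈ Set.Ioo 0 (Real.pi / 2)) :
    HasNegEig (ptrans (projMat (aVec1 α) (aVec3' α β))) := by
  classical
  set s := Real.sin α with hs
  set c := Real.cos α with hc
  set sb := Real.sin β with hsb
  set cb := Real.cos β with hcb
  set t : ℝ := 1 / Real.sqrt 2 with htdef
  have hs0 : 0 < s := Real.sin_pos_of_pos_of_lt_pi hα.1 (by linarith [Real.pi_pos, hα.2])
  have hc0 : 0 < c := Real.cos_pos_of_mem_Ioo ⟨by linarith [Real.pi_pos, hα.1], hα.2⟩
  have hsb0 : 0 < sb := Real.sin_pos_of_pos_of_lt_pi hβ.1 (by linarith [Real.pi_pos, hβ.2])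
  have hcb0 : 0 < cb := Real.cos_pos_of_mem_Ioo ⟨by linarith [Real.pi_pos, hβ.1], hβ.2⟩
  have hpy : s ^ 2 + c ^ 2 = 1 := Real.sin_sq_add_cos_sq α
  have hpyb : sb ^ 2 + cb ^ 2 = 1 := Real.sin_sq_add_cos_sq β
  have ht : t ^ 2 = 1 / 2 := by
    rw [htdef, div_pow, one_pow, Real.sq_sqrt (by norm_num : (2:ℝ) ≥ 0)]
  -- witness vector
  set x : (Fin 2 × Fin 2) → ℂ := fun p =>
    if p = (0, 0) then ((-(sb * cb * s) : ℝ) : ℂ)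
    else if p = (0, 1) then ((cb : ℝ) : ℂ)
    else if p = (1, 0) then ((sb : ℝ) : ℂ)
    else ((-(sb * cb * c) : ℝ) : ℂ) with hx
  set f : ℝ := sb * cb * (sb * cb * ((s * c) ^ 2 + s * c * (sb * cb) - 1 / 2) - s * c)
    with hfdef
  have hf : f < 0 := by
    have hu2 : s * c ≤ 1 / 2 := by nlinarith [sq_nonneg (s - c)]
    have hv2 : sb * cb ≤ 1 / 2 := by nlinarith [sq_nonneg (sb - cb)]
    have hupos : 0 < s * c := mul_pos hs0 hc0
    have hvpos : 0 < sb * cb := mul_pos hsb0 hcb0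
    have hbr : (s * c) ^ 2 + s * c * (sb * cb) - 1 / 2 ≤ 0 := by nlinarith
    have hb2 : sb * cb * ((s * c) ^ 2 + s * c * (sb * cb) - 1 / 2) ≤ 0 :=
      mul_nonpos_of_nonneg_of_nonpos hvpos.le hbr
    rw [hfdef]
    apply mul_neg_of_pos_of_neg hvpos
    linarith
  set M := ptrans (projMat (aVec1 α) (aVec3' α β)) with hM
  have hherm : M.IsHermitian := by
    rw [Matrix.IsHermitian]
    ext p q
    simp only [hM, Matrix.conjTranspose_apply, ptrans, projMat, Matrix.of_apply, star_add,
      star_mul', star_star]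
    ring
  -- component values
  have ha1 : ∀ p : Fin 2 × Fin 2, aVec1 α p =
      if p = (0,0) then ((c : ℝ) : ℂ) else if p = (1,1) then ((-s : ℝ) : ℂ) else 0 := by
    intro p
    rcases p with ⟨a, b⟩
    fin_cases a <;> fin_cases b <;>
      simp [aVec1, ket, EuclideanSpace.single_apply, Prod.ext_iff, ← hs, ← hc]
  have ha3 : ∀ p : Fin 2 × Fin 2, aVec3' α β p =
      if p = (0,0) then ((t * s : ℝ) : ℂ) else if p = (0,1) then ((t * sb : ℝ) : ℂ)
      else if p = (1,0) then ((t * cb : ℝ) : ℂ) else ((t * c : ℝ) : ℂ) := by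
    intro p
    rcases p with ⟨a, b⟩
    fin_cases a <;> fin_cases b <;>
      simp [aVec3', ket, EuclideanSpace.single_apply, Prod.ext_iff, ← hs, ← hc, ← hsb, ← hcb,
        htdef] <;> push_cast <;> ring
  have htC : ((t : ℂ)) ^ 2 = 1 / 2 := by
    rw [← Complex.ofReal_pow, ht]; norm_num
  have hpyC : ((s : ℂ)) ^ 2 + ((c : ℂ)) ^ 2 = 1 := by
    rw [← Complex.ofReal_pow, ← Complex.ofReal_pow, ← Complex.ofReal_add, hpy]; norm_num
  have hform : dotProduct (star x) (M.mulVec x) = (f : ℂ) := by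
    simp only [hM, dotProduct, Matrix.mulVec, Fintype.sum_prod_type, Fin.sum_univ_two,
      ptrans, projMat, Matrix.of_apply, Pi.star_apply]
    simp only [ha1, ha3, hx]
    norm_num [Prod.ext_iff, Fin.ext_iff]
    rw [hfdef]
    push_cast
    linear_combination (2*(sb:ℂ)^2*cb^2 - 4*(c:ℂ)^2*sb^2*cb^2 + (c:ℂ)^4*sb^2*cb^2
        + 2*(s:ℂ)*c*sb*cb + 2*(s:ℂ)*c*sb^3*cb^3 - 4*(s:ℂ)^2*sb^2*cb^2
        + (s:ℂ)^4*sb^2*cb^2) * htC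
      + ((-3/2)*(sb:ℂ)^2*cb^2 + (1/2)*(c:ℂ)^2*sb^2*cb^2 + (1/2)*(s:ℂ)^2*sb^2*cb^2) * hpyC
  exact hasNegEig_of_neg_form M hherm x f hf hform
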